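/- For the Coxeter group H2 and any real a > 0, the multiset of pairwise sums of the orbits O(a,0) and O(0,a) equals O(a,a) ∪ O(aτ-a, aτ-a) ∪ 5·O(0,0) as multisets (25 points with multiplicity), where τ=(1+√5)/2. -/

import Mathlib

open scoped Classical

noncomputable section

/-- Reflection `r₁` in ω-basis coordinates: `r₁ (x,y) = (-x, c₁*x + y)`. -/
def refl1 (c1 : ℝ) (p : ℝ × ℝ) : ℝ × ℝ := (-p.1, c1 * p.1 + p.2)

/-- Reflection `r₂` in ω-basis coordinates: `r₂ (x,y) = (x + c₂*y, -y)`. -/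
def refl2 (c2 : ℝ) (p : ℝ × ℝ) : ℝ × ℝ := (p.1 + c2 * p.2, -p.2)

/-- The orbit of `p` under the group generated by the two reflections. -/
def orbit (c1 c2 : ℝ) (p : ℝ × ℝ) : Set (ℝ × ℝ) :=
  {q | Relation.ReflTransGen (fun u v => v = refl1 c1 u ∨ v = refl2 c2 u) p q}

/-- The golden ratio. -/
def τ : ℝ := (1 + Real.sqrt 5) / 2

/-- The orbit of a dominant point of `H₂` as an explicit multiset (ω-basis coordinates). -/
def H2orbitM (p : ℝ × ℝ) : Multiset (ℝ × ℝ) :=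
  if p.1 = 0 ∧ p.2 = 0 then {((0:ℝ), (0:ℝ))}
  else if p.2 = 0 then
    {(p.1, 0), (-p.1, p.1 * τ), (p.1 * τ, -(p.1 * τ)), (-(p.1 * τ), p.1), (0, -p.1)}
  else if p.1 = 0 then
    {(0, p.2), (p.2 * τ, -p.2), (-(p.2 * τ), p.2 * τ), (p.2, -(p.2 * τ)), (-p.2, 0)}
  else {(p.1, p.2), (-p.1, p.2 + p.1 * τ), (p.1 * τ + p.2 * τ, -p.2 - p.1 * τ),
        (-(p.1 * τ) - p.2 * τ, p.1 + p.2 * τ), (p.2, -p.1 - p.2 * τ),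
        (p.1 + p.2 * τ, -p.2), (-p.1 - p.2 * τ, p.1 * τ + p.2 * τ),
        (p.2 + p.1 * τ, -(p.1 * τ) - p.2 * τ), (-p.2 - p.1 * τ, p.1), (-p.2, -p.1)}

/-- The product of two `H₂` orbits: the multiset of all pairwise sums. -/
def H2prodM (p q : ℝ × ℝ) : Multiset (ℝ × ℝ) :=
  (H2orbitM p).bind fun x => (H2orbitM q).map fun y => x + y

lemma tau_sq : τ * τ = τ + 1 := by
  unfold τ
  have h : Real.sqrt 5 * Real.sqrt 5 = 5 := Real.mul_self_sqrt (by norm_num)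
  nlinarith [h]

lemma tau_gt_one : 1 < τ := by
  unfold τ
  have h : 2 < Real.sqrt 5 := by
    nlinarith [Real.sq_sqrt (by norm_num : (5:ℝ) ≥ 0), Real.sqrt_nonneg 5]
  linarith

/-- Interpret integer coefficient pairs as real points: `(m·a + n·aτ, p·a + q·aτ)`. -/
def fmap (a : ℝ) (v : (ℤ × ℤ) × (ℤ × ℤ)) : ℝ × ℝ :=
  ((v.1.1 : ℝ) * a + (v.1.2 : ℝ) * (a * τ), (v.2.1 : ℝ) * a + (v.2.2 : ℝ) * (a * τ))

lemma fmap_add (a : ℝ) (u v : (ℤ × ℤ) × (ℤ × ℤ)) :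
    fmap a (u + v) = fmap a u + fmap a v := by
  simp only [fmap, Prod.ext_iff, Prod.fst_add, Prod.snd_add]
  push_cast
  constructor <;> ring

lemma orbit_a0 (a : ℝ) (ha : 0 < a) :
    H2orbitM (a, 0) = Multiset.map (fmap a)
      {((1,0),(0,0)), ((-1,0),(0,1)), ((0,1),(0,-1)), ((0,-1),(1,0)), ((0,0),(-1,0))} := by
  simp only [H2orbitM, fmap, ha.ne', and_false, if_false]
  norm_num [fmap]

lemma orbit_0a (a : ℝ) (ha : 0 < a) :
    H2orbitM (0, a) = Multiset.map (fmap a)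
      {((0,0),(1,0)), ((0,1),(-1,0)), ((0,-1),(0,1)), ((1,0),(0,-1)), ((-1,0),(0,0))} := by
  simp only [H2orbitM, fmap, ha.ne', and_false, if_false]
  norm_num [fmap]

lemma orbit_aa (a : ℝ) (ha : 0 < a) :
    H2orbitM (a, a) = Multiset.map (fmap a)
      {((1,0),(1,0)), ((-1,0),(1,1)), ((0,2),(-1,-1)), ((0,-2),(1,1)), ((1,0),(-1,-1)),
       ((1,1),(-1,0)), ((-1,-1),(0,2)), ((1,1),(0,-2)), ((-1,-1),(1,0)), ((-1,0),(-1,0))} := by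
  simp only [H2orbitM, fmap, ha.ne', and_false, if_false, if_neg ha.ne']
  norm_num [fmap]
  ring_nf

lemma orbit_bb (a : ℝ) (ha : 0 < a) :
    H2orbitM (a * τ - a, a * τ - a) = Multiset.map (fmap a)
      {((-1,1),(-1,1)), ((1,-1),(0,1)), ((2,0),(0,-1)), ((-2,0),(0,1)), ((-1,1),(0,-1)),
       ((0,1),(1,-1)), ((0,-1),(2,0)), ((0,1),(-2,0)), ((0,-1),(-1,1)), ((1,-1),(1,-1))} := by
  have hb : a * τ - a ≠ 0 := by nlinarith [tau_gt_one]
  have hbt : (a * τ - a) * τ = a := by nlinarith [tau_sq]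
  simp only [H2orbitM, fmap, hb, and_false, if_false, if_neg hb, hbt]
  norm_num [fmap]
  ring_nf

lemma orbit_00 : H2orbitM (0, 0) = Multiset.map (fmap 0) {((0,0),(0,0))} := by
  simp [H2orbitM, fmap]

theorem H2_product_a0_0a (a : ℝ) (ha : 0 < a) :
    H2prodM (a, 0) (0, a) =
      H2orbitM (a, a) + H2orbitM (a * τ - a, a * τ - a) + 5 • H2orbitM (0, 0) := by
  have h00 : H2orbitM (0, 0) = Multiset.map (fmap a) {((0,0),(0,0))} := by
    simp [H2orbitM, fmap]
  rw [H2prodM, orbit_a0 a ha, orbit_0a a ha, orbit_aa a ha, orbit_bb a ha, h00]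
  rw [Multiset.bind_map]
  simp only [Multiset.map_map, Function.comp]
  have : ∀ x : (ℤ × ℤ) × (ℤ × ℤ),
      (Multiset.map (fun y => fmap a x + fmap a y)
        ({((0,0),(1,0)), ((0,1),(-1,0)), ((0,-1),(0,1)), ((1,0),(0,-1)), ((-1,0),(0,0))} :
          Multiset ((ℤ × ℤ) × (ℤ × ℤ)))) =
      Multiset.map (fmap a) (Multiset.map (fun y => x + y)
        ({((0,0),(1,0)), ((0,1),(-1,0)), ((0,-1),(0,1)), ((1,0),(0,-1)), ((-1,0),(0,0))} :
          Multiset ((ℤ × ℤ) × (ℤ × ℤ)))) := by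
    intro x
    rw [Multiset.map_map]
    exact Multiset.map_congr rfl fun y _ => (fmap_add a x y).symm
  simp only [this]
  rw [← Multiset.map_bind, ← Multiset.map_nsmul, ← Multiset.map_add, ← Multiset.map_add]
  congr 1
  decide
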